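/- For all integers n ≥ 1, the rational functions Ĝ_n(w,x,z) and Ǧ_n(w,x,z) are equal: Ĝ_n(w,x,z) = Ǧ_n(w,x,z). -/
import Mathlib
set_option maxHeartbeats 1000000


open Finset MvPolynomial

noncomputable section

/-- The field of rational functions in three variables `w, x, z` over `ℚ`. -/
abbrev F3 : Type := FractionRing (MvPolynomial (Fin 3) ℚ)

/-- the variable `w` -/
def W : F3 := algebraMap (MvPolynomial (Fin 3) ℚ) F3 (X 0)
/-- the variable `x` -/
def Xv : F3 := algebraMap (MvPolynomial (Fin 3) ℚ) F3 (X 1)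
/-- the variable `z` -/
def Zv : F3 := algebraMap (MvPolynomial (Fin 3) ℚ) F3 (X 2)

/-- `Ĝ_n(w, x, z)`, defined by `Ĝ_1(w,x,z) = 1/(1-w)` and, for `n ≥ 2`,
`Ĝ_n(w,x,z) = ∑_{k=1}^{n-1} Ĝ_k(w,x,z) Ĝ_{n-k}(w+kz,x,z) / (1-w-(n-1)x)`. -/
def Ghat (x z : F3) : ℕ → F3 → F3
  | 0, _ => 0
  | 1, w => 1 / (1 - w)
  | (n + 2), w =>
      ∑ k ∈ (Finset.Icc 1 (n + 1)).attach,
        Ghat x z k.1 w * Ghat x z (n + 2 - k.1) (w + (k.1 : F3) * z) /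
          (1 - w - ((n + 1 : ℕ) : F3) * x)
  termination_by n _ => n
  decreasing_by
  · have := Finset.mem_Icc.mp k.2; omega
  · have := Finset.mem_Icc.mp k.2; omega

/-- `Ǧ_n(w, x, z)`, defined by `Ǧ_1(w,x,z) = 1/(1-w)` and, for `n ≥ 2`,
`Ǧ_n(w,x,z) = ∑_{k=1}^{n-1} Ǧ_k(w+x,x,z) Ǧ_{n-k}(w+kz,x,z) / (1-w)`. -/
def Gcheck (x z : F3) : ℕ → F3 → F3
  | 0, _ => 0
  | 1, w => 1 / (1 - w)
  | (n + 2), w =>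
      ∑ k ∈ (Finset.Icc 1 (n + 1)).attach,
        Gcheck x z k.1 (w + x) * Gcheck x z (n + 2 - k.1) (w + (k.1 : F3) * z) /
          (1 - w)
  termination_by n _ => n
  decreasing_by
  · have := Finset.mem_Icc.mp k.2; omega
  · have := Finset.mem_Icc.mp k.2; omega

lemma gc0 (w : F3) : Gcheck Xv Zv 0 w = 0 := by rw [Gcheck]
lemma gc1 (w : F3) : Gcheck Xv Zv 1 w = 1 / (1-w) := by rw [Gcheck]
lemma gc2 (n : ℕ) (w : F3) : Gcheck Xv Zv (n+2) w
    = (∑ k ∈ Finset.Icc 1 (n+1), Gcheck Xv Zv k (w + Xv) * Gcheck Xv Zv (n+2-k) (w + (k : F3) * Zv)) / (1-w) := by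
  rw [Gcheck, ← Finset.sum_div,
    Finset.sum_attach (Finset.Icc 1 (n+1)) (fun k => Gcheck Xv Zv k (w + Xv) * Gcheck Xv Zv (n+2-k) (w + (k : F3) * Zv))]

def Good (w : F3) : Prop := ∀ a b : ℕ, (1:F3) - w - (a:F3)*Xv - (b:F3)*Zv ≠ 0

lemma good_W : Good W := by
  intro a b
  have h : (1:F3) - W - (a:F3)*Xv - (b:F3)*Zv
      = algebraMap (MvPolynomial (Fin 3) ℚ) F3 (1 - X 0 - (a : MvPolynomial (Fin 3) ℚ) * X 1 - (b : MvPolynomial (Fin 3) ℚ) * X 2) := by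
    simp [W, Xv, Zv, map_sub, map_mul, map_one, map_natCast]
  rw [h]
  intro hc
  have hp := (map_eq_zero_iff _ (IsFractionRing.injective (MvPolynomial (Fin 3) ℚ) F3)).mp hc
  have := congrArg MvPolynomial.constantCoeff hp
  simp at this

lemma Good.sub1 {w : F3} (hw : Good w) : (1:F3) - w ≠ 0 := by
  have := hw 0 0; simpa using this

lemma Good.subX {w : F3} (hw : Good w) (n : ℕ) : (1:F3) - w - (n:F3)*Xv ≠ 0 := by
  have := hw n 0; simpa using this

lemma Good.addX {w : F3} (hw : Good w) : Good (w + Xv) := by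
  intro a b
  have h : (1:F3) - (w+Xv) - (a:F3)*Xv - (b:F3)*Zv
      = 1 - w - ((a+1 : ℕ):F3)*Xv - (b:F3)*Zv := by push_cast; ring
  rw [h]; exact hw (a+1) b

lemma Good.addZ {w : F3} (hw : Good w) (k : ℕ) : Good (w + (k:F3)*Zv) := by
  intro a b
  have h : (1:F3) - (w+(k:F3)*Zv) - (a:F3)*Xv - (b:F3)*Zv
      = 1 - w - (a:F3)*Xv - ((b+k : ℕ):F3)*Zv := by push_cast; ring
  rw [h]; exact hw a (b+k)

lemma gc_mul (n : ℕ) (w : F3) (hw : (1:F3) - w ≠ 0) :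
    (1-w) * Gcheck Xv Zv (n+2) w
    = ∑ k ∈ Finset.Icc 1 (n+1), Gcheck Xv Zv k (w + Xv) * Gcheck Xv Zv (n+2-k) (w + (k : F3) * Zv) := by
  rw [gc2, mul_div_cancel₀ _ hw]

lemma gc_mul' {n : ℕ} (h2 : 2 ≤ n) (w : F3) (hw : (1:F3) - w ≠ 0) :
    (1-w) * Gcheck Xv Zv n w
    = ∑ k ∈ Finset.Icc 1 (n-1), Gcheck Xv Zv k (w + Xv) * Gcheck Xv Zv (n-k) (w + (k : F3) * Zv) := by
  obtain ⟨m, rfl⟩ : ∃ m, n = m + 2 := ⟨n - 2, by omega⟩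
  exact gc_mul m w hw

lemma gc1_mul (w : F3) (hw : (1:F3) - w ≠ 0) : (1-w) * Gcheck Xv Zv 1 w = 1 := by
  rw [gc1, mul_div_cancel₀ _ hw]



def Cc (n : ℕ) (w : F3) : F3 :=
  ∑ i ∈ Finset.Icc 1 n, ((n+1-i : ℕ):F3) * Gcheck Xv Zv i w
      * Gcheck Xv Zv (n+1-i) (w + Xv + ((i-1 : ℕ):F3) * Zv)

lemma tri (N : ℕ) (g : ℕ → ℕ → F3) :
    ∑ k ∈ Finset.Icc 1 N, ∑ l ∈ Finset.Icc 1 (k-1), g l (k-l)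
    = ∑ l ∈ Finset.Icc 1 N, ∑ j ∈ Finset.Icc 1 (N-l), g l j := by
  rw [Finset.sum_sigma', Finset.sum_sigma']
  apply Finset.sum_nbij' (i := fun a => (⟨a.2, a.1 - a.2⟩ : Σ _ : ℕ, ℕ))
    (j := fun a => (⟨a.1 + a.2, a.1⟩ : Σ _ : ℕ, ℕ))
  · intro a ha
    simp only [Finset.mem_sigma, Finset.mem_Icc] at ha ⊢
    omega
  · intro a ha
    simp only [Finset.mem_sigma, Finset.mem_Icc] at ha ⊢
    omega
  · intro a ha
    simp only [Finset.mem_sigma, Finset.mem_Icc] at ha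
    rcases a with ⟨k, l⟩
    simp only at ha ⊢
    have h : l + (k - l) = k := by omega
    simp [h]
  · intro a ha
    simp only [Finset.mem_sigma, Finset.mem_Icc] at ha
    rcases a with ⟨l, j⟩
    simp only at ha ⊢
    have h : l + j - l = j := by omega
    simp [h]
  · intro a ha
    rfl


lemma star (m : ℕ)
    (hE : ∀ w : F3, Good w → ∑ k ∈ Finset.Icc 1 (m-1), Cc k w * Gcheck Xv Zv (m-k) (w + (k:F3)*Zv)
        = ((m-1:ℕ):F3) * Gcheck Xv Zv m w) :
    ∀ w : F3, Good w → (1-w) * Cc m w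
      = Gcheck Xv Zv m (w+Xv)
        + ∑ k ∈ Finset.Icc 1 (m-1), (Cc k (w+Xv) * Gcheck Xv Zv (m-k) (w+Xv+(k:F3)*Zv)
            + Gcheck Xv Zv k (w+Xv) * Cc (m-k) (w + (k:F3)*Zv)) := by
  intro w hw
  obtain _ | mm := m
  · simp [Cc, gc0]
  have herase : (Finset.Icc 1 (mm+1)).erase 1 = Finset.Icc 2 (mm+1) := by
    ext a; simp only [Finset.mem_erase, Finset.mem_Icc]; omega
  -- the common triple-sum expression
  have h23 : ∑ i ∈ Finset.Icc 1 (mm+1), ∑ j ∈ Finset.Icc 1 (i-1),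
        ((mm+2-(j+(i-j)) : ℕ):F3) * (Gcheck Xv Zv j (w+Xv) * Gcheck Xv Zv (i-j) (w+(j:F3)*Zv))
          * Gcheck Xv Zv (mm+2-(j+(i-j))) (w+Xv+((j+(i-j)-1 : ℕ):F3)*Zv)
      = ∑ l ∈ Finset.Icc 1 (mm+1), ∑ p ∈ Finset.Icc 1 (mm+1-l),
        ((mm+2-(l+p) : ℕ):F3) * (Gcheck Xv Zv l (w+Xv) * Gcheck Xv Zv p (w+(l:F3)*Zv))
          * Gcheck Xv Zv (mm+2-(l+p)) (w+Xv+((l+p-1 : ℕ):F3)*Zv) := by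
    exact tri (mm+1) (fun l p =>
      ((mm+2-(l+p) : ℕ):F3) * (Gcheck Xv Zv l (w+Xv) * Gcheck Xv Zv p (w+(l:F3)*Zv))
        * Gcheck Xv Zv (mm+2-(l+p)) (w+Xv+((l+p-1 : ℕ):F3)*Zv))
  have hterm1 : (1-w) * (((mm+1+1-1 : ℕ):F3) * Gcheck Xv Zv 1 w
        * Gcheck Xv Zv (mm+1+1-1) (w+Xv+((1-1 : ℕ):F3)*Zv))
      = ((mm+1:ℕ):F3) * Gcheck Xv Zv (mm+1) (w+Xv) := by
    have h0 : (mm+1+1-1 : ℕ) = mm+1 := by omega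
    have h1 : (1-1 : ℕ) = 0 := rfl
    rw [h0, h1]
    simp only [Nat.cast_zero, zero_mul, add_zero]
    linear_combination ((mm+1:ℕ):F3) * Gcheck Xv Zv (mm+1) (w+Xv) * gc1_mul w hw.sub1
  have hsum2 : ∑ i ∈ Finset.Icc 2 (mm+1),
        (1-w) * (((mm+1+1-i : ℕ):F3) * Gcheck Xv Zv i w
          * Gcheck Xv Zv (mm+1+1-i) (w+Xv+((i-1 : ℕ):F3)*Zv))
      = ∑ l ∈ Finset.Icc 1 (mm+1), ∑ p ∈ Finset.Icc 1 (mm+1-l),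
            ((mm+2-(l+p) : ℕ):F3) * (Gcheck Xv Zv l (w+Xv) * Gcheck Xv Zv p (w+(l:F3)*Zv))
              * Gcheck Xv Zv (mm+2-(l+p)) (w+Xv+((l+p-1 : ℕ):F3)*Zv) := by
    have step1 : ∀ i ∈ Finset.Icc 2 (mm+1),
        (1-w) * (((mm+1+1-i : ℕ):F3) * Gcheck Xv Zv i w
          * Gcheck Xv Zv (mm+1+1-i) (w+Xv+((i-1 : ℕ):F3)*Zv))
        = ∑ j ∈ Finset.Icc 1 (i-1),
            ((mm+2-(j+(i-j)) : ℕ):F3) * (Gcheck Xv Zv j (w+Xv) * Gcheck Xv Zv (i-j) (w+(j:F3)*Zv))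
              * Gcheck Xv Zv (mm+2-(j+(i-j))) (w+Xv+((j+(i-j)-1 : ℕ):F3)*Zv) := by
      intro i hi
      rw [Finset.mem_Icc] at hi
      have hrec := gc_mul' (show 2 ≤ i by omega) w hw.sub1
      calc (1-w) * (((mm+1+1-i : ℕ):F3) * Gcheck Xv Zv i w
              * Gcheck Xv Zv (mm+1+1-i) (w+Xv+((i-1 : ℕ):F3)*Zv))
          = ((1-w) * Gcheck Xv Zv i w) * (((mm+1+1-i : ℕ):F3)
              * Gcheck Xv Zv (mm+1+1-i) (w+Xv+((i-1 : ℕ):F3)*Zv)) := by ring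
        _ = (∑ j ∈ Finset.Icc 1 (i-1), Gcheck Xv Zv j (w+Xv) * Gcheck Xv Zv (i-j) (w+(j:F3)*Zv))
              * (((mm+1+1-i : ℕ):F3)
              * Gcheck Xv Zv (mm+1+1-i) (w+Xv+((i-1 : ℕ):F3)*Zv)) := by rw [hrec]
        _ = ∑ j ∈ Finset.Icc 1 (i-1),
              ((mm+2-(j+(i-j)) : ℕ):F3) * (Gcheck Xv Zv j (w+Xv) * Gcheck Xv Zv (i-j) (w+(j:F3)*Zv))
                * Gcheck Xv Zv (mm+2-(j+(i-j))) (w+Xv+((j+(i-j)-1 : ℕ):F3)*Zv) := by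
            rw [Finset.sum_mul]
            refine Finset.sum_congr rfl fun j hj => ?_
            rw [Finset.mem_Icc] at hj
            have e4 : mm+2-(j+(i-j)) = mm+1+1-i := by omega
            have e5 : j+(i-j)-1 = i-1 := by omega
            rw [e4, e5]
            ring
    rw [Finset.sum_congr rfl step1]
    rw [← h23, ← herase]
    exact Finset.sum_erase _ (by
      rw [show (1:ℕ)-1 = 0 from rfl, Finset.Icc_eq_empty (by omega)]
      exact Finset.sum_empty)
  have lhs1 : (1-w) * Cc (mm+1) w
      = ((mm+1:ℕ):F3) * Gcheck Xv Zv (mm+1) (w+Xv)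
        + ∑ l ∈ Finset.Icc 1 (mm+1), ∑ p ∈ Finset.Icc 1 (mm+1-l),
            ((mm+2-(l+p) : ℕ):F3) * (Gcheck Xv Zv l (w+Xv) * Gcheck Xv Zv p (w+(l:F3)*Zv))
              * Gcheck Xv Zv (mm+2-(l+p)) (w+Xv+((l+p-1 : ℕ):F3)*Zv) := by
    simp only [Cc, Finset.mul_sum]
    rw [← Finset.add_sum_erase _ _ (show 1 ∈ Finset.Icc 1 (mm+1) by simp), herase,
      hterm1, hsum2]
  rw [lhs1, Finset.sum_add_distrib]
  have rhs1 : ∑ k ∈ Finset.Icc 1 (mm+1-1), Cc k (w+Xv) * Gcheck Xv Zv (mm+1-k) (w+Xv+(k:F3)*Zv)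
      = ((mm+1-1:ℕ):F3) * Gcheck Xv Zv (mm+1) (w+Xv) := hE (w+Xv) hw.addX
  rw [rhs1]
  have rhs2 : ∑ k ∈ Finset.Icc 1 (mm+1-1), Gcheck Xv Zv k (w+Xv) * Cc (mm+1-k) (w + (k:F3)*Zv)
      = ∑ l ∈ Finset.Icc 1 (mm+1), ∑ p ∈ Finset.Icc 1 (mm+1-l),
          ((mm+2-(l+p) : ℕ):F3) * (Gcheck Xv Zv l (w+Xv) * Gcheck Xv Zv p (w+(l:F3)*Zv))
            * Gcheck Xv Zv (mm+2-(l+p)) (w+Xv+((l+p-1 : ℕ):F3)*Zv) := by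
    rw [Finset.sum_Icc_succ_top (show 1 ≤ mm+1 by omega)]
    have htop : ∑ p ∈ Finset.Icc 1 (mm+1-(mm+1)),
        ((mm+2-((mm+1)+p) : ℕ):F3) * (Gcheck Xv Zv (mm+1) (w+Xv) * Gcheck Xv Zv p (w+((mm+1:ℕ):F3)*Zv))
          * Gcheck Xv Zv (mm+2-((mm+1)+p)) (w+Xv+(((mm+1)+p-1 : ℕ):F3)*Zv) = 0 := by
      simp
    rw [htop, add_zero]
    refine Finset.sum_congr rfl fun k hk => ?_
    rw [Finset.mem_Icc] at hk
    simp only [Cc, Finset.mul_sum]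
    refine Finset.sum_congr rfl fun p hp => ?_
    rw [Finset.mem_Icc] at hp
    have e1 : (mm+1-k+1-p : ℕ) = mm+2-(k+p) := by omega
    have e2 : (w + (k:F3)*Zv + Xv + ((p-1 : ℕ):F3)*Zv) = w + Xv + ((k+p-1 : ℕ):F3)*Zv := by
      rw [show k+p-1 = k+(p-1) by omega, Nat.cast_add]
      ring
    rw [e1, e2]
    ring
  rw [rhs2]
  have hc : ((mm+1:ℕ):F3) = 1 + ((mm+1-1:ℕ):F3) := by push_cast; ring
  rw [hc]
  ring

lemma Cc0 (w : F3) : Cc 0 w = 0 := by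
  rw [Cc, Finset.Icc_eq_empty (by omega), Finset.sum_empty]

lemma Cc1 (w : F3) : Cc 1 w = Gcheck Xv Zv 1 w * Gcheck Xv Zv 1 (w + Xv) := by
  rw [Cc, Finset.Icc_self, Finset.sum_singleton]
  norm_num

lemma EP_all : ∀ n : ℕ, ∀ w : F3, Good w →
    ∑ k ∈ Finset.Icc 1 (n-1), Cc k w * Gcheck Xv Zv (n-k) (w + (k:F3)*Zv)
      = ((n-1:ℕ):F3) * Gcheck Xv Zv n w := by
  intro n
  induction n using Nat.strong_induction_on with
  | _ n ih =>
  obtain h01 | ⟨m, rfl⟩ : n ≤ 1 ∨ ∃ m, n = m+2 := by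
    rcases n with _|_|m
    · exact Or.inl (by omega)
    · exact Or.inl (by omega)
    · exact Or.inr ⟨m, rfl⟩
  · intro w hw
    have h0 : n - 1 = 0 := by omega
    rw [h0, Finset.Icc_eq_empty (by omega), Finset.sum_empty]
    simp
  intro w hw
  rw [show (m+2-1 : ℕ) = m+1 by omega]
  apply mul_left_cancel₀ hw.sub1
  have expand : ∀ k ∈ Finset.Icc 1 (m+1),
      (1-w) * (Cc k w * Gcheck Xv Zv (m+2-k) (w + (k:F3)*Zv))
      = Gcheck Xv Zv k (w+Xv) * Gcheck Xv Zv (m+2-k) (w + (k:F3)*Zv)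
        + (((k-1:ℕ):F3) * Gcheck Xv Zv k (w+Xv) * Gcheck Xv Zv (m+2-k) (w + (k:F3)*Zv)
        + ∑ l ∈ Finset.Icc 1 (k-1), Gcheck Xv Zv l (w+Xv)
            * (Cc (k-l) (w+(l:F3)*Zv) * Gcheck Xv Zv (m+2-k) (w + (k:F3)*Zv))) := by
    intro k hk
    rw [Finset.mem_Icc] at hk
    have hs := star k (ih k (by omega)) w hw
    have hih := ih k (by omega) (w+Xv) hw.addX
    calc (1-w) * (Cc k w * Gcheck Xv Zv (m+2-k) (w + (k:F3)*Zv))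
        = ((1-w) * Cc k w) * Gcheck Xv Zv (m+2-k) (w + (k:F3)*Zv) := by ring
      _ = (Gcheck Xv Zv k (w+Xv)
            + ∑ l ∈ Finset.Icc 1 (k-1), (Cc l (w+Xv) * Gcheck Xv Zv (k-l) (w+Xv+(l:F3)*Zv)
                + Gcheck Xv Zv l (w+Xv) * Cc (k-l) (w + (l:F3)*Zv)))
            * Gcheck Xv Zv (m+2-k) (w + (k:F3)*Zv) := by rw [hs]
      _ = Gcheck Xv Zv k (w+Xv) * Gcheck Xv Zv (m+2-k) (w + (k:F3)*Zv)
          + ((∑ l ∈ Finset.Icc 1 (k-1), Cc l (w+Xv) * Gcheck Xv Zv (k-l) (w+Xv+(l:F3)*Zv))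
              * Gcheck Xv Zv (m+2-k) (w + (k:F3)*Zv)
          + (∑ l ∈ Finset.Icc 1 (k-1), Gcheck Xv Zv l (w+Xv) * Cc (k-l) (w + (l:F3)*Zv))
              * Gcheck Xv Zv (m+2-k) (w + (k:F3)*Zv)) := by
            rw [Finset.sum_add_distrib]; ring
      _ = Gcheck Xv Zv k (w+Xv) * Gcheck Xv Zv (m+2-k) (w + (k:F3)*Zv)
          + (((k-1:ℕ):F3) * Gcheck Xv Zv k (w+Xv) * Gcheck Xv Zv (m+2-k) (w + (k:F3)*Zv)
          + ∑ l ∈ Finset.Icc 1 (k-1), Gcheck Xv Zv l (w+Xv)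
              * (Cc (k-l) (w+(l:F3)*Zv) * Gcheck Xv Zv (m+2-k) (w + (k:F3)*Zv))) := by
            rw [hih, Finset.sum_mul]
            have hassoc : ∀ l ∈ Finset.Icc 1 (k-1),
                Gcheck Xv Zv l (w+Xv) * Cc (k-l) (w + (l:F3)*Zv)
                  * Gcheck Xv Zv (m+2-k) (w + (k:F3)*Zv)
                = Gcheck Xv Zv l (w+Xv)
                  * (Cc (k-l) (w+(l:F3)*Zv) * Gcheck Xv Zv (m+2-k) (w + (k:F3)*Zv)) :=
              fun l hl => by ring
            rw [Finset.sum_congr rfl hassoc]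
  rw [Finset.mul_sum, Finset.sum_congr rfl expand, Finset.sum_add_distrib,
    Finset.sum_add_distrib]
  -- T2 : the double sum
  have hT2 : ∑ k ∈ Finset.Icc 1 (m+1), ∑ l ∈ Finset.Icc 1 (k-1), Gcheck Xv Zv l (w+Xv)
        * (Cc (k-l) (w+(l:F3)*Zv) * Gcheck Xv Zv (m+2-k) (w + (k:F3)*Zv))
      = ∑ k ∈ Finset.Icc 1 (m+1), ((m+1-k:ℕ):F3)
          * (Gcheck Xv Zv k (w+Xv) * Gcheck Xv Zv (m+2-k) (w + (k:F3)*Zv)) := by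
    have hconv : ∀ k ∈ Finset.Icc 1 (m+1), ∀ l ∈ Finset.Icc 1 (k-1),
        Gcheck Xv Zv l (w+Xv) * (Cc (k-l) (w+(l:F3)*Zv) * Gcheck Xv Zv (m+2-k) (w + (k:F3)*Zv))
        = Gcheck Xv Zv l (w+Xv) * (Cc (k-l) (w+(l:F3)*Zv)
            * Gcheck Xv Zv (m+2-l-(k-l)) (w+(l:F3)*Zv+((k-l:ℕ):F3)*Zv)) := by
      intro k hk l hl
      rw [Finset.mem_Icc] at hk hl
      rw [show m+2-l-(k-l) = m+2-k by omega,
        show w+(l:F3)*Zv+((k-l:ℕ):F3)*Zv = w+(k:F3)*Zv by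
          push_cast [Nat.cast_sub (show l ≤ k by omega)]; ring]
    calc ∑ k ∈ Finset.Icc 1 (m+1), ∑ l ∈ Finset.Icc 1 (k-1), Gcheck Xv Zv l (w+Xv)
          * (Cc (k-l) (w+(l:F3)*Zv) * Gcheck Xv Zv (m+2-k) (w + (k:F3)*Zv))
        = ∑ k ∈ Finset.Icc 1 (m+1), ∑ l ∈ Finset.Icc 1 (k-1), Gcheck Xv Zv l (w+Xv)
          * (Cc (k-l) (w+(l:F3)*Zv) * Gcheck Xv Zv (m+2-l-(k-l)) (w+(l:F3)*Zv+((k-l:ℕ):F3)*Zv)) := by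
          exact Finset.sum_congr rfl fun k hk => Finset.sum_congr rfl fun l hl => hconv k hk l hl
      _ = ∑ l ∈ Finset.Icc 1 (m+1), ∑ p ∈ Finset.Icc 1 (m+1-l), Gcheck Xv Zv l (w+Xv)
          * (Cc p (w+(l:F3)*Zv) * Gcheck Xv Zv (m+2-l-p) (w+(l:F3)*Zv+(p:F3)*Zv)) := by
          exact tri (m+1) (fun l p => Gcheck Xv Zv l (w+Xv)
            * (Cc p (w+(l:F3)*Zv) * Gcheck Xv Zv (m+2-l-p) (w+(l:F3)*Zv+(p:F3)*Zv)))
      _ = ∑ k ∈ Finset.Icc 1 (m+1), ((m+1-k:ℕ):F3)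
          * (Gcheck Xv Zv k (w+Xv) * Gcheck Xv Zv (m+2-k) (w + (k:F3)*Zv)) := by
          refine Finset.sum_congr rfl fun l hl => ?_
          rw [Finset.mem_Icc] at hl
          rw [← Finset.mul_sum]
          rw [show m+1-l = m+2-l-1 by omega]
          rw [ih (m+2-l) (by omega) (w+(l:F3)*Zv) (hw.addZ l)]
          rw [show m+2-l-1 = m+1-l by omega]
          ring
  rw [hT2]
  rw [← gc_mul m w hw.sub1]
  have hcomb : ∑ k ∈ Finset.Icc 1 (m+1), ((k-1:ℕ):F3) * Gcheck Xv Zv k (w+Xv)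
        * Gcheck Xv Zv (m+2-k) (w + (k:F3)*Zv)
      + ∑ k ∈ Finset.Icc 1 (m+1), ((m+1-k:ℕ):F3)
        * (Gcheck Xv Zv k (w+Xv) * Gcheck Xv Zv (m+2-k) (w + (k:F3)*Zv))
      = ((m:ℕ):F3) * ∑ k ∈ Finset.Icc 1 (m+1),
          Gcheck Xv Zv k (w+Xv) * Gcheck Xv Zv (m+2-k) (w + (k:F3)*Zv) := by
    rw [← Finset.sum_add_distrib, Finset.mul_sum]
    refine Finset.sum_congr rfl fun k hk => ?_
    rw [Finset.mem_Icc] at hk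
    have hc : ((k-1:ℕ):F3) + ((m+1-k:ℕ):F3) = ((m:ℕ):F3) := by
      rw [← Nat.cast_add, show (k-1)+(m+1-k) = m by omega]
    linear_combination (Gcheck Xv Zv k (w+Xv) * Gcheck Xv Zv (m+2-k) (w + (k:F3)*Zv)) * hc
  rw [hcomb, ← gc_mul m w hw.sub1]
  push_cast
  ring

lemma delta : ∀ n : ℕ, ∀ w : F3, Good w →
    Gcheck Xv Zv n (w+Xv) = Gcheck Xv Zv n w + Xv * Cc n w := by
  intro n
  induction n using Nat.strong_induction_on with
  | _ n ih =>
  obtain rfl | rfl | ⟨m, rfl⟩ : n = 0 ∨ n = 1 ∨ ∃ m, n = m+2 := by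
    rcases n with _|_|m
    · exact Or.inl rfl
    · exact Or.inr (Or.inl rfl)
    · exact Or.inr (Or.inr ⟨m, rfl⟩)
  · intro w hw
    rw [gc0, gc0, Cc0]
    ring
  · intro w hw
    have h1 := hw.sub1
    have h2 : (1:F3) - (w+Xv) ≠ 0 := hw.addX.sub1
    rw [gc1, gc1, Cc1, gc1, gc1]
    field_simp
    ring
  · intro w hw
    have h1 := hw.sub1
    have hx1 : (1:F3) - (w+Xv) ≠ 0 := hw.addX.sub1
    apply mul_left_cancel₀ h1
    have hA : (1-w) * Gcheck Xv Zv (m+2) (w+Xv)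
        = (∑ k ∈ Finset.Icc 1 (m+1), Gcheck Xv Zv k (w+Xv+Xv)
            * Gcheck Xv Zv (m+2-k) (w+Xv+(k:F3)*Zv)) + Xv * Gcheck Xv Zv (m+2) (w+Xv) := by
      linear_combination gc_mul m (w+Xv) hx1
    have hstar := star (m+2) (EP_all (m+2)) w hw
    rw [Finset.sum_add_distrib] at hstar
    have hsum : ∑ k ∈ Finset.Icc 1 (m+1), Gcheck Xv Zv k (w+Xv+Xv)
          * Gcheck Xv Zv (m+2-k) (w+Xv+(k:F3)*Zv)
        = ∑ k ∈ Finset.Icc 1 (m+1), (Gcheck Xv Zv k (w+Xv) * Gcheck Xv Zv (m+2-k) (w+(k:F3)*Zv)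
            + (Xv * (Cc k (w+Xv) * Gcheck Xv Zv (m+2-k) (w+Xv+(k:F3)*Zv))
              + Xv * (Gcheck Xv Zv k (w+Xv) * Cc (m+2-k) (w+(k:F3)*Zv)))) := by
      refine Finset.sum_congr rfl fun k hk => ?_
      rw [Finset.mem_Icc] at hk
      have d1 := ih k (by omega) (w+Xv) hw.addX
      have d2 := ih (m+2-k) (by omega) (w+(k:F3)*Zv) (hw.addZ k)
      have harg : w + (k:F3)*Zv + Xv = w + Xv + (k:F3)*Zv := by ring
      rw [harg] at d2
      rw [d1, d2]
      ring
    rw [show (m+2-1 : ℕ) = m+1 by omega] at hstar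
    calc (1-w) * Gcheck Xv Zv (m+2) (w+Xv)
        = (∑ k ∈ Finset.Icc 1 (m+1), Gcheck Xv Zv k (w+Xv+Xv)
            * Gcheck Xv Zv (m+2-k) (w+Xv+(k:F3)*Zv)) + Xv * Gcheck Xv Zv (m+2) (w+Xv) := hA
      _ = (∑ k ∈ Finset.Icc 1 (m+1), (Gcheck Xv Zv k (w+Xv) * Gcheck Xv Zv (m+2-k) (w+(k:F3)*Zv)
            + (Xv * (Cc k (w+Xv) * Gcheck Xv Zv (m+2-k) (w+Xv+(k:F3)*Zv))
              + Xv * (Gcheck Xv Zv k (w+Xv) * Cc (m+2-k) (w+(k:F3)*Zv)))))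
            + Xv * Gcheck Xv Zv (m+2) (w+Xv) := by rw [hsum]
      _ = (∑ k ∈ Finset.Icc 1 (m+1), Gcheck Xv Zv k (w+Xv) * Gcheck Xv Zv (m+2-k) (w+(k:F3)*Zv))
            + (Xv * ∑ k ∈ Finset.Icc 1 (m+1), Cc k (w+Xv) * Gcheck Xv Zv (m+2-k) (w+Xv+(k:F3)*Zv)
            + Xv * ∑ k ∈ Finset.Icc 1 (m+1), Gcheck Xv Zv k (w+Xv) * Cc (m+2-k) (w+(k:F3)*Zv))
            + Xv * Gcheck Xv Zv (m+2) (w+Xv) := by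
          rw [Finset.sum_add_distrib, Finset.sum_add_distrib, ← Finset.mul_sum, ← Finset.mul_sum]
      _ = (1-w) * (Gcheck Xv Zv (m+2) w + Xv * Cc (m+2) w) := by
          linear_combination (-1 : F3) * gc_mul m w h1 - Xv * hstar

lemma gh0 (w : F3) : Ghat Xv Zv 0 w = 0 := by rw [Ghat]
lemma gh1 (w : F3) : Ghat Xv Zv 1 w = 1 / (1-w) := by rw [Ghat]
lemma gh2 (n : ℕ) (w : F3) : Ghat Xv Zv (n+2) w
    = (∑ k ∈ Finset.Icc 1 (n+1), Ghat Xv Zv k w * Ghat Xv Zv (n+2-k) (w + (k : F3) * Zv))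
        / (1 - w - ((n+1:ℕ):F3) * Xv) := by
  rw [Ghat, ← Finset.sum_div,
    Finset.sum_attach (Finset.Icc 1 (n+1)) (fun k => Ghat Xv Zv k w * Ghat Xv Zv (n+2-k) (w + (k : F3) * Zv))]

lemma main_aux : ∀ n : ℕ, ∀ w : F3, Good w → Ghat Xv Zv n w = Gcheck Xv Zv n w := by
  intro n
  induction n using Nat.strong_induction_on with
  | _ n ih =>
  obtain rfl | rfl | ⟨m, rfl⟩ : n = 0 ∨ n = 1 ∨ ∃ m, n = m+2 := by
    rcases n with _|_|m
    · exact Or.inl rfl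
    · exact Or.inr (Or.inl rfl)
    · exact Or.inr (Or.inr ⟨m, rfl⟩)
  · intro w hw; rw [gh0, gc0]
  · intro w hw; rw [gh1, gc1]
  · intro w hw
    have hD : (1:F3) - w - ((m+1:ℕ):F3)*Xv ≠ 0 := hw.subX (m+1)
    rw [gh2]
    have hconv : ∀ k ∈ Finset.Icc 1 (m+1),
        Ghat Xv Zv k w * Ghat Xv Zv (m+2-k) (w+(k:F3)*Zv)
        = Gcheck Xv Zv k w * Gcheck Xv Zv (m+2-k) (w+(k:F3)*Zv) := by
      intro k hk
      rw [Finset.mem_Icc] at hk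
      rw [ih k (by omega) w hw, ih (m+2-k) (by omega) (w+(k:F3)*Zv) (hw.addZ k)]
    rw [Finset.sum_congr rfl hconv, div_eq_iff hD]
    have hdelta : ∀ k ∈ Finset.Icc 1 (m+1),
        Gcheck Xv Zv k w * Gcheck Xv Zv (m+2-k) (w+(k:F3)*Zv)
        = Gcheck Xv Zv k (w+Xv) * Gcheck Xv Zv (m+2-k) (w+(k:F3)*Zv)
          - Xv * (Cc k w * Gcheck Xv Zv (m+2-k) (w+(k:F3)*Zv)) := by
      intro k hk
      linear_combination (-(Gcheck Xv Zv (m+2-k) (w+(k:F3)*Zv))) * (delta k w hw)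
    rw [Finset.sum_congr rfl hdelta, Finset.sum_sub_distrib, ← Finset.mul_sum]
    rw [← gc_mul m w hw.sub1]
    have hE := EP_all (m+2) w hw
    rw [show (m+2-1 : ℕ) = m+1 by omega] at hE
    rw [hE]
    ring

/-- For all `n ≥ 1`, the rational functions `Ĝ_n(w,x,z)` and `Ǧ_n(w,x,z)` are equal. -/
theorem Ghat_eq_Gcheck : ∀ n : ℕ, 1 ≤ n → Ghat Xv Zv n W = Gcheck Xv Zv n W := by
  intro n _
  exact main_aux n W good_W

end
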